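/- For the 1-dimensional gadget construction: the sequence M(S*) obtained from a string S* ∈ {A,B}^t by mapping each character to a pair of points (0 then −2 for A; 0 then 2 for B) and appending a final 0, has discrete Fréchet distance at most 1 to the sequence A^a = ⟨1, (−3, 1)^a⟩ whenever S* contains exactly a occurrences of A, and discrete Fréchet distance at most 1 to B^b = ⟨−1, (3, −1)^b⟩ whenever S* contains exactly b occurrences of B. -/

import Mathlib

open Set

/-- One step of a traversal: increment one or both indices by 1. -/
def FrStep (p q : ℕ × ℕ) : Prop :=
  (q.1 = p.1 + 1 ∧ q.2 = p.2) ∨ (q.1 = p.1 ∧ q.2 = p.2 + 1) ∨ (q.1 = p.1 + 1 ∧ q.2 = p.2 + 1)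

/-- `T` is a traversal of two sequences of lengths `m` and `m'` (0-indexed):
it starts at `(0,0)`, ends at `(m-1, m'-1)`, and each step increments one or both indices. -/
def IsTraversal (m m' : ℕ) (T : List (ℕ × ℕ)) : Prop :=
  T ≠ [] ∧ T.head? = some (0, 0) ∧ T.getLast? = some (m - 1, m' - 1) ∧
    T.Chain' FrStep

/-- The discrete Fréchet distance between two finite point sequences:
the least `r` such that some traversal keeps all paired points within distance `r`. -/
noncomputable def dDF {α : Type*} [PseudoMetricSpace α] [Inhabited α]
    (P Q : List α) : ℝ :=
  sInf { r : ℝ | ∃ T : List (ℕ × ℕ), IsTraversal P.length Q.length T ∧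
    ∀ p ∈ T, dist (P.getD p.1 default) (Q.getD p.2 default) ≤ r }

/-- The two-letter alphabet `{A, B}`. -/
inductive AB : Type
  | A : AB
  | B : AB
deriving DecidableEq

/-- The sequence `⟨1, (−3, 1)^a⟩` with `a` occurrences of `−3`. -/
def Aseq (a : ℕ) : List ℝ := 1 :: (List.replicate a [(-3 : ℝ), 1]).flatten

/-- The sequence `⟨−1, (3, −1)^b⟩` with `b` occurrences of `3`. -/
def Bseq (b : ℕ) : List ℝ := -1 :: (List.replicate b [(3 : ℝ), -1]).flatten

/-- The middle-curve sequence representing a string `S` over `{A, B}`: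
each character maps to the pair `0, −2` (for `A`) or `0, 2` (for `B`),
and a final `0` is appended. -/
def MSeq (S : List AB) : List ℝ :=
  (S.map (fun c => [(0 : ℝ), match c with | AB.A => -2 | AB.B => 2])).flatten ++ [0]


def trav (g : AB → ℕ) : List AB → List (ℕ × ℕ)
  | [] => [(0,0)]
  | c :: S => (0,0) :: (1, g c) :: (trav g S).map (fun p => (p.1 + 2, p.2 + 2 * g c))

lemma trav_ne_nil (g : AB → ℕ) (S : List AB) : trav g S ≠ [] := by
  cases S <;> simp [trav]

lemma trav_head (g : AB → ℕ) (S : List AB) : (trav g S).head? = some (0,0) := by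
  cases S <;> simp [trav]

lemma trav_last (g : AB → ℕ) (S : List AB) :
    (trav g S).getLast? = some (2 * S.length, 2 * (S.map g).sum) := by
  induction S with
  | nil => simp [trav]
  | cons c S ih =>
    rw [trav, List.getLast?_cons_cons, List.getLast?_cons, List.getLast?_map, ih]
    simp only [Option.map_some, Option.getD_some, List.length_cons, List.map_cons,
      List.sum_cons]
    congr 1
    ext <;> simp <;> ring

lemma trav_chain (g : AB → ℕ) (hg : ∀ c, g c ≤ 1) (S : List AB) :
    (trav g S).Chain' FrStep := by
  induction S with
  | nil => simp [trav, List.Chain', List.isChain_singleton]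
  | cons c S ih =>
    simp only [trav, List.Chain'] at ih ⊢
    refine List.IsChain.cons_cons ?_ (List.IsChain.cons ?_ ?_)
    · have := hg c; unfold FrStep; simp; omega
    · rw [List.isChain_map]
      refine ih.imp ?_
      intro p q h
      unfold FrStep at *; simp; omega
    · intro x hx
      rw [List.head?_map, trav_head] at hx
      simp only [Option.map_some, Option.mem_def, Option.some.injEq] at hx
      subst hx
      have := hg c; unfold FrStep; simp; omega

def gA : AB → ℕ | AB.A => 1 | AB.B => 0
def gB : AB → ℕ | AB.A => 0 | AB.B => 1

lemma MSeq_cons (c : AB) (S : List AB) :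
    MSeq (c :: S) = 0 :: (match c with | AB.A => (-2:ℝ) | AB.B => 2) :: MSeq S := by
  simp [MSeq]

lemma Aseq_succ (a : ℕ) : Aseq (a + 1) = 1 :: -3 :: Aseq a := by
  simp [Aseq, List.replicate_succ]

lemma Bseq_succ (b : ℕ) : Bseq (b + 1) = -1 :: 3 :: Bseq b := by
  simp [Bseq, List.replicate_succ]

lemma MSeq_length (S : List AB) : (MSeq S).length = 2 * S.length + 1 := by
  induction S with
  | nil => simp [MSeq]
  | cons c S ih => rw [MSeq_cons]; simp only [List.length_cons, ih]; ring

lemma Aseq_length (a : ℕ) : (Aseq a).length = 2 * a + 1 := by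
  induction a with
  | zero => simp [Aseq]
  | succ a ih => rw [Aseq_succ]; simp only [List.length_cons, ih]; ring

lemma Bseq_length (b : ℕ) : (Bseq b).length = 2 * b + 1 := by
  induction b with
  | zero => simp [Bseq]
  | succ b ih => rw [Bseq_succ]; simp only [List.length_cons, ih]; ring

lemma sum_gA (S : List AB) : (S.map gA).sum = S.count AB.A := by
  induction S with
  | nil => simp
  | cons c S ih =>
    cases c <;> simp [gA, ih, List.count_cons]; try omega

lemma sum_gB (S : List AB) : (S.map gB).sum = S.count AB.B := by
  induction S with
  | nil => simp
  | cons c S ih =>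
    cases c <;> simp [gB, ih, List.count_cons]; try omega

lemma distA (S : List AB) : ∀ p ∈ trav gA S,
    dist ((MSeq S).getD p.1 (0:ℝ)) ((Aseq (S.count AB.A)).getD p.2 (0:ℝ)) ≤ 1 := by
  induction S with
  | nil =>
    intro p hp
    simp only [trav, List.mem_singleton] at hp
    subst hp
    simp [MSeq, Aseq, Real.dist_eq]
  | cons c S ih =>
    intro p hp
    cases c with
    | A =>
      rw [MSeq_cons]
      have hc : (AB.A :: S).count AB.A = S.count AB.A + 1 := by
        simp [List.count_cons]
      rw [hc, Aseq_succ]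
      simp only [trav, gA, List.mem_cons, List.mem_map] at hp
      rcases hp with rfl | rfl | ⟨q, hq, rfl⟩
      · simp [Real.dist_eq]; try norm_num
      · simp [Real.dist_eq]; try norm_num
      · simpa using ih q hq
    | B =>
      rw [MSeq_cons]
      have hc : (AB.B :: S).count AB.A = S.count AB.A := by
        simp [List.count_cons]
      rw [hc]
      simp only [trav, gA, List.mem_cons, List.mem_map] at hp
      rcases hp with rfl | rfl | ⟨q, hq, rfl⟩
      · cases S with
        | nil => simp [Aseq, Real.dist_eq]; try norm_num
        | cons d S' =>
          cases hd : (d :: S').count AB.A with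
          | zero => simp [Aseq, Real.dist_eq]; try norm_num
          | succ n => rw [Aseq_succ]; simp [Real.dist_eq]; try norm_num
      · cases hd : S.count AB.A with
        | zero => simp [Aseq, Real.dist_eq]; try norm_num
        | succ n => rw [Aseq_succ]; simp [Real.dist_eq]; try norm_num
      · simpa using ih q hq

lemma distB (S : List AB) : ∀ p ∈ trav gB S,
    dist ((MSeq S).getD p.1 (0:ℝ)) ((Bseq (S.count AB.B)).getD p.2 (0:ℝ)) ≤ 1 := by
  induction S with
  | nil =>
    intro p hp
    simp only [trav, List.mem_singleton] at hp
    subst hp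
    simp [MSeq, Bseq, Real.dist_eq]
  | cons c S ih =>
    intro p hp
    cases c with
    | B =>
      rw [MSeq_cons]
      have hc : (AB.B :: S).count AB.B = S.count AB.B + 1 := by
        simp [List.count_cons]
      rw [hc, Bseq_succ]
      simp only [trav, gB, List.mem_cons, List.mem_map] at hp
      rcases hp with rfl | rfl | ⟨q, hq, rfl⟩
      · simp [Real.dist_eq]; try norm_num
      · simp [Real.dist_eq]; try norm_num
      · simpa using ih q hq
    | A =>
      rw [MSeq_cons]
      have hc : (AB.A :: S).count AB.B = S.count AB.B := by
        simp [List.count_cons]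
      rw [hc]
      simp only [trav, gB, List.mem_cons, List.mem_map] at hp
      rcases hp with rfl | rfl | ⟨q, hq, rfl⟩
      · cases hd : S.count AB.B with
        | zero => simp [Bseq, Real.dist_eq]; try norm_num
        | succ n => rw [Bseq_succ]; simp [Real.dist_eq]; try norm_num
      · cases hd : S.count AB.B with
        | zero => simp [Bseq, Real.dist_eq]; try norm_num
        | succ n => rw [Bseq_succ]; simp [Real.dist_eq]; try norm_num
      · simpa using ih q hq

lemma dDF_le_one {P Q : List ℝ} (T : List (ℕ × ℕ))
    (hT : IsTraversal P.length Q.length T)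
    (hd : ∀ p ∈ T, dist (P.getD p.1 (0:ℝ)) (Q.getD p.2 (0:ℝ)) ≤ 1) :
    dDF P Q ≤ 1 := by
  apply csInf_le
  · refine ⟨0, fun r hr => ?_⟩
    obtain ⟨T', hT', hd'⟩ := hr
    have h00 : (0,0) ∈ T' := List.mem_of_mem_head? (by rw [hT'.2.1]; rfl)
    exact le_trans dist_nonneg (hd' _ h00)
  · exact ⟨T, hT, hd⟩


theorem MSeq_close_to_gadgets (S : List AB) (a b : ℕ)
    (ha : S.count AB.A = a) (hb : S.count AB.B = b) :
    dDF (MSeq S) (Aseq a) ≤ 1 ∧ dDF (MSeq S) (Bseq b) ≤ 1 := by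
  subst ha hb
  constructor
  · refine dDF_le_one (trav gA S) ⟨trav_ne_nil _ _, trav_head _ _, ?_, trav_chain _ (by
      intro c; cases c <;> simp [gA]) _⟩ (distA S)
    rw [trav_last, MSeq_length, Aseq_length, sum_gA]
    simp
  · refine dDF_le_one (trav gB S) ⟨trav_ne_nil _ _, trav_head _ _, ?_, trav_chain _ (by
      intro c; cases c <;> simp [gB]) _⟩ (distB S)
    rw [trav_last, MSeq_length, Bseq_length, sum_gB]
    simp
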